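/- Let v₀ ∈ ℝ, c > 0, and C ≥ 1, and let F : [v₀, ∞) → [0, ∞) be locally integrable. Suppose that for all v₀ ≤ v₁ ≤ v₂ one has F(v₂) + c·∫_{v₁}^{v₂} F(s) ds ≤ C·F(v₁). Then there exist constants α > 0 and K > 0, depending only on c and C, such that F(v) ≤ K·F(v₀)·e^{−α(v−v₀)} for all v ≥ v₀. -/

import Mathlib

/-- Pigeonhole argument converting an integrated decay estimate into exponential
decay: if `F ≥ 0` satisfies `F(v₂) + c∫_{v₁}^{v₂}F ≤ C·F(v₁)` for all
`v₀ ≤ v₁ ≤ v₂`, then `F(v) ≤ K·F(v₀)·e^{−α(v−v₀)}` with `α, K > 0` depending only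
on `c` and `C`. -/
theorem stmt_16 (c C : ℝ) (hc : 0 < c) (hC : 1 ≤ C) :
    ∃ α > 0, ∃ K > 0, ∀ (v₀ : ℝ) (F : ℝ → ℝ),
      (∀ v, v₀ ≤ v → 0 ≤ F v) →
      MeasureTheory.LocallyIntegrableOn F (Set.Ici v₀) →
      (∀ v₁ v₂, v₀ ≤ v₁ → v₁ ≤ v₂ → F v₂ + c * ∫ t in v₁..v₂, F t ≤ C * F v₁) →
      ∀ v, v₀ ≤ v → F v ≤ K * F v₀ * Real.exp (-α * (v - v₀)) := by
  have hC0 : (0:ℝ) < C := lt_of_lt_of_le one_pos hC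
  set L : ℝ := C * (2 * C - 1) / c with hLdef
  have hL : 0 < L := by
    apply div_pos _ hc
    have : (1:ℝ) ≤ 2 * C - 1 := by linarith
    nlinarith
  have hlog2 : (0:ℝ) < Real.log 2 := Real.log_pos (by norm_num)
  refine ⟨Real.log 2 / L, div_pos hlog2 hL, 2 * C, by linarith, ?_⟩
  intro v₀ F hF hloc hineq v hv
  -- basic boundedness
  have key : ∀ v₁ v₂, v₀ ≤ v₁ → v₁ ≤ v₂ → F v₂ ≤ C * F v₁ := by
    intro v₁ v₂ h1 h12
    have hnn : 0 ≤ ∫ t in v₁..v₂, F t :=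
      intervalIntegral.integral_nonneg h12 (fun u hu => hF u (le_trans h1 hu.1))
    nlinarith [hineq v₁ v₂ h1 h12]
  have hint : ∀ v₁ v₂, v₀ ≤ v₁ → v₁ ≤ v₂ → IntervalIntegrable F MeasureTheory.volume v₁ v₂ := by
    intro v₁ v₂ h1 h12
    have hsub : Set.Icc v₁ v₂ ⊆ Set.Ici v₀ := fun x hx => le_trans h1 hx.1
    have := hloc.integrableOn_compact_subset hsub isCompact_Icc
    exact (intervalIntegrable_iff_integrableOn_Icc_of_le h12).2 this
  have lower : ∀ v₁ v₂, v₀ ≤ v₁ → v₁ ≤ v₂ →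
      (v₂ - v₁) * (F v₂ / C) ≤ ∫ t in v₁..v₂, F t := by
    intro v₁ v₂ h1 h12
    have hmono : ∀ t ∈ Set.Icc v₁ v₂, F v₂ / C ≤ F t := by
      intro t ht
      have := key t v₂ (le_trans h1 ht.1) ht.2
      exact (div_le_iff₀' hC0).2 this
    calc (v₂ - v₁) * (F v₂ / C) = ∫ _ in v₁..v₂, F v₂ / C := by
          rw [intervalIntegral.integral_const, smul_eq_mul]
      _ ≤ ∫ t in v₁..v₂, F t := by
          apply intervalIntegral.integral_mono_on h12 (intervalIntegrable_const)
            (hint v₁ v₂ h1 h12) hmono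
  have step : ∀ v₁, v₀ ≤ v₁ → F (v₁ + L) ≤ F v₁ / 2 := by
    intro v₁ h1
    have h12 : v₁ ≤ v₁ + L := by linarith
    have hlo := lower v₁ (v₁ + L) h1 h12
    have hin := hineq v₁ (v₁ + L) h1 h12
    have hLc : c * L = C * (2 * C - 1) := by
      rw [hLdef]; field_simp
    have hFnn : 0 ≤ F (v₁ + L) := hF _ (le_trans h1 h12)
    -- F(v₁+L) + c * L * F(v₁+L)/C ≤ C F v₁
    have : F (v₁ + L) + c * (L * (F (v₁ + L) / C)) ≤ C * F v₁ := by
      have := mul_le_mul_of_nonneg_left hlo hc.le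
      simp only [add_sub_cancel_left] at this
      linarith
    have heq : c * (F (v₁ + L) / C) * L = (2 * C - 1) * F (v₁ + L) := by
      calc c * (F (v₁ + L) / C) * L = (c * L) * F (v₁ + L) / C := by ring
        _ = C * (2 * C - 1) * F (v₁ + L) / C := by rw [hLc]
        _ = (2 * C - 1) * F (v₁ + L) := by field_simp
    nlinarith [this, heq]
  have iter : ∀ n : ℕ, F (v₀ + n * L) ≤ F v₀ / 2 ^ n := by
    intro n
    induction n with
    | zero => simp
    | succ m ih =>
      have h1 : v₀ ≤ v₀ + m * L := by
        have := mul_nonneg (Nat.cast_nonneg m : (0:ℝ) ≤ m) hL.le; linarith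
      have := step (v₀ + m * L) h1
      have heq : v₀ + (↑(m+1)) * L = (v₀ + m * L) + L := by push_cast; ring
      rw [heq]
      calc F ((v₀ + m * L) + L) ≤ F (v₀ + m * L) / 2 := this
        _ ≤ (F v₀ / 2 ^ m) / 2 := by linarith
        _ = F v₀ / 2 ^ (m + 1) := by ring
  set n : ℕ := ⌊(v - v₀) / L⌋₊ with hn
  have hvn : v₀ + n * L ≤ v := by
    have := Nat.floor_le (a := (v - v₀) / L) (div_nonneg (by linarith) hL.le)
    have : (n : ℝ) * L ≤ v - v₀ := by
      calc (n : ℝ) * L ≤ ((v - v₀) / L) * L := by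
            exact mul_le_mul_of_nonneg_right this hL.le
        _ = v - v₀ := by field_simp
    linarith
  have h1 : v₀ ≤ v₀ + n * L := by
    have := mul_nonneg (Nat.cast_nonneg n : (0:ℝ) ≤ n) hL.le; linarith
  have hFv : F v ≤ C * (F v₀ / 2 ^ n) :=
    le_trans (key (v₀ + n * L) v h1 hvn) (by
      have := iter n
      nlinarith [hF v₀ le_rfl])
  have hexp : (1:ℝ) / 2 ^ (n + 1) ≤ Real.exp (-(Real.log 2 / L) * (v - v₀)) := by
    have hflt : (v - v₀) / L < n + 1 := Nat.lt_floor_add_one _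
    have h2 : Real.log 2 / L * (v - v₀) ≤ (n + 1) * Real.log 2 := by
      have : Real.log 2 / L * (v - v₀) = Real.log 2 * ((v - v₀) / L) := by ring
      rw [this]
      have := mul_le_mul_of_nonneg_left hflt.le hlog2.le
      linarith
    have hle : -((n:ℝ) + 1) * Real.log 2 ≤ -(Real.log 2 / L) * (v - v₀) := by linarith
    calc (1:ℝ) / 2 ^ (n + 1) = Real.exp (-((n:ℝ) + 1) * Real.log 2) := by
          rw [neg_mul, Real.exp_neg]
          rw [show ((n:ℝ) + 1) = ((n + 1 : ℕ) : ℝ) by push_cast; ring,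
            Real.exp_nat_mul, Real.exp_log (by norm_num)]
          · norm_num
      _ ≤ _ := Real.exp_le_exp.2 hle
  have hFv₀ : 0 ≤ F v₀ := hF v₀ le_rfl
  calc F v ≤ C * (F v₀ / 2 ^ n) := hFv
    _ = 2 * C * F v₀ * (1 / 2 ^ (n + 1)) := by ring
    _ ≤ 2 * C * F v₀ * Real.exp (-(Real.log 2 / L) * (v - v₀)) := by
        apply mul_le_mul_of_nonneg_left hexp
        positivity
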